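/- In the free group F of rank 2 with basis {a, b}, the commutator [a, b] = a b a⁻¹ b⁻¹ is not a proper power: there is no element c ∈ F and integer n ≥ 2 with c^n = [a, b]. -/
import Mathlib

@[ext]
structure Heis where
  x : ℤ
  y : ℤ
  z : ℤ

namespace Heis

instance : Mul Heis := ⟨fun g h => ⟨g.x + h.x, g.y + h.y, g.z + h.z + g.x * h.y⟩⟩
instance : One Heis := ⟨⟨0, 0, 0⟩⟩
instance : Inv Heis := ⟨fun g => ⟨-g.x, -g.y, g.x * g.y - g.z⟩⟩

@[simp] lemma mul_def (g h : Heis) :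
    g * h = ⟨g.x + h.x, g.y + h.y, g.z + h.z + g.x * h.y⟩ := rfl

@[simp] lemma inv_def (g : Heis) : g⁻¹ = ⟨-g.x, -g.y, g.x * g.y - g.z⟩ := rfl

@[simp] lemma one_def : (1 : Heis) = ⟨0, 0, 0⟩ := rfl

instance : Group Heis where
  mul_assoc g h k := by ext <;> simp <;> ring
  one_mul g := by ext <;> simp
  mul_one g := by ext <;> simp
  inv_mul_cancel g := by ext <;> simp



lemma pow_x (g : Heis) (n : ℕ) : (g ^ n).x = n * g.x := by
  induction n with
  | zero => simp
  | succ n ih => rw [pow_succ]; simp [ih]; ring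

lemma pow_y (g : Heis) (n : ℕ) : (g ^ n).y = n * g.y := by
  induction n with
  | zero => simp
  | succ n ih => rw [pow_succ]; simp [ih]; ring

lemma pow_z_central (g : Heis) (hx : g.x = 0) (n : ℕ) : (g ^ n).z = n * g.z := by
  induction n with
  | zero => simp
  | succ n ih => rw [pow_succ]; simp [ih, hx, pow_x]; ring

end Heis

/-- In the free group of rank 2 on generators a = of 0 and b = of 1, the
commutator [a,b] is not a proper power. -/
theorem stmt_3 :
    ¬ ∃ (c : FreeGroup (Fin 2)) (n : ℕ), 2 ≤ n ∧
      c ^ n = FreeGroup.of 0 * FreeGroup.of 1 * (FreeGroup.of 0)⁻¹ * (FreeGroup.of 1)⁻¹ := by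
  rintro ⟨c, n, hn, hc⟩
  set φ : FreeGroup (Fin 2) →* Heis :=
    FreeGroup.lift (fun i => if i = 0 then ⟨1, 0, 0⟩ else ⟨0, 1, 0⟩) with hφ
  have hcomm : φ (FreeGroup.of 0 * FreeGroup.of 1 * (FreeGroup.of 0)⁻¹ * (FreeGroup.of 1)⁻¹)
      = ⟨0, 0, 1⟩ := by
    simp [hφ, FreeGroup.lift_apply_of]
  have h : (φ c) ^ n = ⟨0, 0, 1⟩ := by
    rw [← map_pow, hc, hcomm]
  have hx : ((φ c) ^ n).x = 0 := by rw [h]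
  have hy : ((φ c) ^ n).y = 0 := by rw [h]
  rw [Heis.pow_x] at hx
  rw [Heis.pow_y] at hy
  have hn0 : (n : ℤ) ≠ 0 := by exact_mod_cast (by omega : n ≠ 0)
  have hcx : (φ c).x = 0 := by
    rcases mul_eq_zero.mp hx with h' | h' <;> [exact absurd h' hn0; exact h']
  have hz : ((φ c) ^ n).z = 1 := by rw [h]
  rw [Heis.pow_z_central _ hcx] at hz
  have : (n : ℤ) ∣ 1 := ⟨(φ c).z, hz.symm⟩
  have := Int.le_of_dvd one_pos this
  omega
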